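/- Let W be an N×N real matrix with nonnegative entries that is weight-balanced, with Laplacian L = D − W. Let x̂, e ∈ ℝᴺ, set x = x̂ − e, and let a_1,…,a_N ∈ (0,1). Then −xᵀL x̂ ≤ −(1/2) Σ_{i=1}^N Σ_{j=1}^N w_{ij} [ (1 − a_i)(x̂_i − x̂_j)² − e_i²/a_i ]. -/
import Mathlib


open Matrix Finset

/-- The out-degree of node `i`: the `i`-th row sum of the weight matrix. -/
def outDeg {N : ℕ} (W : Matrix (Fin N) (Fin N) ℝ) (i : Fin N) : ℝ := ∑ j, W i j

/-- `W` is weight-balanced if every row sum equals the corresponding column sum. -/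
def IsWeightBalanced {N : ℕ} (W : Matrix (Fin N) (Fin N) ℝ) : Prop :=
  ∀ i, (∑ j, W i j) = ∑ j, W j i

/-- The Laplacian `L = D − W`. -/
noncomputable def lap {N : ℕ} (W : Matrix (Fin N) (Fin N) ℝ) : Matrix (Fin N) (Fin N) ℝ :=
  Matrix.diagonal (outDeg W) - W
/-- for weight-balanced nonnegative `W`, `x = x̂ − e` and `aᵢ ∈ (0,1)`,
`−xᵀLx̂ ≤ −(1/2) ∑ᵢ∑ⱼ wᵢⱼ [(1 − aᵢ)(x̂ᵢ − x̂ⱼ)² − eᵢ²/aᵢ]`. -/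
theorem stmt3 {N : ℕ} (W : Matrix (Fin N) (Fin N) ℝ) (hW : ∀ i j, 0 ≤ W i j)
    (hWB : IsWeightBalanced W) (xh e : Fin N → ℝ) (a : Fin N → ℝ)
    (ha : ∀ i, a i ∈ Set.Ioo (0 : ℝ) 1) :
    -((xh - e) ⬝ᵥ (lap W *ᵥ xh)) ≤
      -(1/2) * ∑ i, ∑ j, W i j * ((1 - a i) * (xh i - xh j)^2 - e i^2 / a i) := by
  have hmv : ∀ i, (lap W *ᵥ xh) i = ∑ j, W i j * (xh i - xh j) := by
    intro i
    simp only [lap, mulVec, dotProduct, Matrix.sub_apply, Matrix.diagonal_apply,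
      sub_mul, ite_mul, zero_mul, Finset.sum_sub_distrib, Finset.sum_ite_eq,
      Finset.mem_univ, if_true, mul_sub, outDeg, Finset.sum_mul]
  have expand : -((xh - e) ⬝ᵥ (lap W *ᵥ xh))
      = ∑ i, ∑ j, (e i - xh i) * (W i j * (xh i - xh j)) := by
    rw [dotProduct]
    rw [← Finset.sum_neg_distrib]
    refine Finset.sum_congr rfl fun i _ => ?_
    rw [hmv i, Pi.sub_apply, Finset.mul_sum, ← Finset.sum_neg_distrib]
    refine Finset.sum_congr rfl fun j _ => ?_
    ring
  have bal : ∑ i, ∑ j, W i j * (xh j) ^ 2 = ∑ i, ∑ j, W i j * (xh i) ^ 2 := by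
    rw [Finset.sum_comm]
    refine Finset.sum_congr rfl fun j _ => ?_
    rw [← Finset.sum_mul, ← Finset.sum_mul, ← hWB j]
  have sym : ∑ i, ∑ j, xh i * (W i j * (xh i - xh j))
      = ∑ i, ∑ j, W i j * (xh i - xh j) ^ 2 / 2 := by
    have h1 : ∀ i j : Fin N, xh i * (W i j * (xh i - xh j))
        = W i j * (xh i - xh j) ^ 2 / 2 + W i j * (xh i) ^ 2 / 2 - W i j * (xh j) ^ 2 / 2 :=
      fun i j => by ring
    simp only [h1, Finset.sum_sub_distrib, Finset.sum_add_distrib, ← Finset.sum_div, bal]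
    ring
  have key : ∀ i j : Fin N, e i * (W i j * (xh i - xh j))
      ≤ W i j * (a i * (xh i - xh j) ^ 2 + e i ^ 2 / a i) / 2 := by
    intro i j
    have hai := (ha i).1
    have hcan : e i ^ 2 / a i * a i = e i ^ 2 := div_mul_cancel₀ _ (ne_of_gt hai)
    have hterm : e i * (xh i - xh j) ≤ (a i * (xh i - xh j) ^ 2 + e i ^ 2 / a i) / 2 := by
      nlinarith [sq_nonneg (a i * (xh i - xh j) - e i), hai, hcan]
    calc e i * (W i j * (xh i - xh j)) = W i j * (e i * (xh i - xh j)) := by ring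
      _ ≤ W i j * ((a i * (xh i - xh j) ^ 2 + e i ^ 2 / a i) / 2) :=
          mul_le_mul_of_nonneg_left hterm (hW i j)
      _ = W i j * (a i * (xh i - xh j) ^ 2 + e i ^ 2 / a i) / 2 := by ring
  have hsum : ∑ i, ∑ j, e i * (W i j * (xh i - xh j))
      ≤ ∑ i, ∑ j, W i j * (a i * (xh i - xh j) ^ 2 + e i ^ 2 / a i) / 2 :=
    Finset.sum_le_sum fun i _ => Finset.sum_le_sum fun j _ => key i j
  have split : ∑ i, ∑ j, (e i - xh i) * (W i j * (xh i - xh j))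
      = (∑ i, ∑ j, e i * (W i j * (xh i - xh j)))
        - ∑ i, ∑ j, xh i * (W i j * (xh i - xh j)) := by
    simp only [sub_mul, Finset.sum_sub_distrib]
  have expand2 : -(1/2) * ∑ i, ∑ j, W i j * ((1 - a i) * (xh i - xh j)^2 - e i^2 / a i)
      = (∑ i, ∑ j, W i j * (a i * (xh i - xh j) ^ 2 + e i ^ 2 / a i) / 2)
        - ∑ i, ∑ j, W i j * (xh i - xh j) ^ 2 / 2 := by
    rw [← Finset.sum_sub_distrib]
    rw [Finset.mul_sum]
    refine Finset.sum_congr rfl fun i _ => ?_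
    rw [Finset.mul_sum, ← Finset.sum_sub_distrib]
    refine Finset.sum_congr rfl fun j _ => ?_
    ring
  rw [expand, expand2, split, ← sym]
  linarith
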